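/- Under Assumptions 1–3, for every N ≥ d (with d ≥ 1) one has sup_{ω ∈ Δ^N} g_N(ω) = J*. In particular, the complexity of the robust convex program, i.e., the smallest k with sup_{ω ∈ Δ^k} g_k(ω) = J*, is at most d. -/

import Mathlib

open MeasureTheory Set

/-- Scenario optimal value `g_N(ω) = inf { c·x : x ∈ X, f(x, δ_i) ≤ 0, i = 1,…,N }`. -/
noncomputable def scenVal {d m N : ℕ} (X : Set (EuclideanSpace ℝ (Fin d)))
    (c : EuclideanSpace ℝ (Fin d))
    (f : EuclideanSpace ℝ (Fin d) → EuclideanSpace ℝ (Fin m) → ℝ)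
    (ω : Fin N → EuclideanSpace ℝ (Fin m)) : ℝ :=
  sInf ((fun x => ∑ i, c i * x i) '' {x ∈ X | ∀ i, f x (ω i) ≤ 0})

/-- Robust optimal value `J* = inf { c·x : x ∈ X, f(x,δ) ≤ 0 for all δ ∈ Δ }`. -/
noncomputable def robustVal {d m : ℕ} (X : Set (EuclideanSpace ℝ (Fin d)))
    (c : EuclideanSpace ℝ (Fin d))
    (f : EuclideanSpace ℝ (Fin d) → EuclideanSpace ℝ (Fin m) → ℝ)
    (Δ : Set (EuclideanSpace ℝ (Fin m))) : ℝ :=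
  sInf ((fun x => ∑ i, c i * x i) '' {x ∈ X | ∀ δ ∈ Δ, f x δ ≤ 0})

/-- `g_N^* = sup_{ω ∈ Δ^N} g_N(ω)`. -/
noncomputable def scenSup {d m : ℕ} (X : Set (EuclideanSpace ℝ (Fin d)))
    (c : EuclideanSpace ℝ (Fin d))
    (f : EuclideanSpace ℝ (Fin d) → EuclideanSpace ℝ (Fin m) → ℝ)
    (Δ : Set (EuclideanSpace ℝ (Fin m))) (N : ℕ) : ℝ :=
  sSup {r : ℝ | ∃ ω : Fin N → EuclideanSpace ℝ (Fin m),
    (∀ i, ω i ∈ Δ) ∧ scenVal X c f ω = r}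

/-- A sublevel set of a function lower semicontinuous on a compact set is compact. -/
lemma isCompact_sublevel_aux {E : Type*} [TopologicalSpace E] [T2Space E] {X : Set E}
    (hX : IsCompact X) {g : E → ℝ} (hg : LowerSemicontinuousOn g X) :
    IsCompact {x ∈ X | g x ≤ 0} := by
  haveI : CompactSpace X := isCompact_iff_compactSpace.mp hX
  have hres : LowerSemicontinuous fun x : X => g ↑x := by
    intro x y hy
    have h := hg ↑x x.2 y hy
    rw [← map_nhds_subtype_val] at h
    exact h
  have hcl : IsClosed ((fun x : X => g ↑x) ⁻¹' Iic (0 : ℝ)) := hres.isClosed_preimage 0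
  have hK : IsCompact ((fun x : X => g ↑x) ⁻¹' Iic (0 : ℝ)) := hcl.isCompact
  have himg := hK.image continuous_subtype_val
  convert himg using 1
  ext y
  constructor
  · rintro ⟨hyX, hy0⟩
    exact ⟨⟨y, hyX⟩, hy0, rfl⟩
  · rintro ⟨⟨z, hz⟩, hz0, rfl⟩
    exact ⟨hz, hz0⟩

/-- Under Assumptions 1–3, for every N ≥ d (d ≥ 1) one has sup_{ω ∈ Δ^N} g_N(ω) = J*;
in particular the complexity of the robust program (smallest k with
sup_{ω ∈ Δ^k} g_k(ω) = J*) is at most d. -/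
theorem stmt_3 {d m : ℕ} (hd : 1 ≤ d)
    (X : Set (EuclideanSpace ℝ (Fin d))) (c : EuclideanSpace ℝ (Fin d))
    (Δ : Set (EuclideanSpace ℝ (Fin m))) (hΔne : Δ.Nonempty)
    (f : EuclideanSpace ℝ (Fin d) → EuclideanSpace ℝ (Fin m) → ℝ)
    -- Assumption 1
    (hlsc : LowerSemicontinuousOn (Function.uncurry f) (X ×ˢ Δ))
    (hXcomp : IsCompact X)
    -- Assumption 2
    (hfeas : ∃ x ∈ X, ∀ δ ∈ Δ, f x δ ≤ 0)
    -- Assumption 3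
    (hXconv : Convex ℝ X)
    (hconv : ∀ δ ∈ Δ, ConvexOn ℝ X fun x => f x δ) :
    (∀ N : ℕ, d ≤ N → scenSup X c f Δ N = robustVal X c f Δ) ∧
      sInf {k : ℕ | scenSup X c f Δ k = robustVal X c f Δ} ≤ d := by
  classical
  obtain ⟨x₀, hx₀X, hx₀⟩ := hfeas
  obtain ⟨δ₀, hδ₀⟩ := hΔne
  set L : EuclideanSpace ℝ (Fin d) → ℝ := fun x => ∑ i, c i * x i with hLdef
  have hLcont : Continuous L := by
    apply continuous_finset_sum
    intro i _
    exact continuous_const.mul ((EuclideanSpace.proj (𝕜 := ℝ) i).continuous)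
  have hLlin : IsLinearMap ℝ L := by
    constructor
    · intro x y
      simp only [hLdef, PiLp.add_apply, mul_add, Finset.sum_add_distrib]
    · intro a x
      simp only [hLdef, PiLp.smul_apply, smul_eq_mul, Finset.mul_sum]
      congr 1; ext i; ring
  -- robust feasible set
  set R : Set (EuclideanSpace ℝ (Fin d)) := {x ∈ X | ∀ δ ∈ Δ, f x δ ≤ 0} with hRdef
  have hx₀R : x₀ ∈ R := ⟨hx₀X, hx₀⟩
  have hRX : R ⊆ X := fun x hx => hx.1
  have hbddX : BddBelow (L '' X) := (hXcomp.image hLcont).bddBelow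
  have hbdd : ∀ S : Set (EuclideanSpace ℝ (Fin d)), S ⊆ X → BddBelow (L '' S) :=
    fun S hS => hbddX.mono (Set.image_mono hS)
  set J : ℝ := robustVal X c f Δ with hJdef
  have hJeq : J = sInf (L '' R) := rfl
  -- the constraint sets
  set A : EuclideanSpace ℝ (Fin m) → Set (EuclideanSpace ℝ (Fin d)) :=
    fun δ => {x ∈ X | f x δ ≤ 0} with hAdef
  have hAX : ∀ δ, A δ ⊆ X := fun δ x hx => hx.1
  have hx₀A : ∀ δ ∈ Δ, x₀ ∈ A δ := fun δ hδ => ⟨hx₀X, hx₀ δ hδ⟩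
  have hAconv : ∀ δ ∈ Δ, Convex ℝ (A δ) := fun δ hδ => (hconv δ hδ).convex_le 0
  have hAcomp : ∀ δ ∈ Δ, IsCompact (A δ) := by
    intro δ hδ
    apply isCompact_sublevel_aux hXcomp
    intro x hx y hy
    have h := hlsc (x, δ) ⟨hx, hδ⟩ y hy
    have htend : Filter.Tendsto (fun x' => (x', δ)) (nhdsWithin x X)
        (nhdsWithin (x, δ) (X ×ˢ Δ)) := by
      apply tendsto_nhdsWithin_of_tendsto_nhds_of_eventually_within
      · exact Filter.Tendsto.prodMk_nhds (nhdsWithin_le_nhds) tendsto_const_nhds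
      · exact Filter.eventually_of_mem self_mem_nhdsWithin (fun x' hx' => ⟨hx', hδ⟩)
    exact htend.eventually h
  -- every scenario value (with scenarios in Δ) is at most J
  have hub : ∀ N : ℕ, ∀ ω : Fin N → EuclideanSpace ℝ (Fin m),
      (∀ i, ω i ∈ Δ) → scenVal X c f ω ≤ J := by
    intro N ω hω
    have hsub : R ⊆ {x ∈ X | ∀ i, f x (ω i) ≤ 0} :=
      fun x hx => ⟨hx.1, fun i => hx.2 (ω i) (hω i)⟩
    exact csInf_le_csInf (hbdd _ (fun x hx => hx.1)) ⟨L x₀, x₀, hx₀R, rfl⟩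
      (Set.image_mono hsub)
  -- sets of scenario values are nonempty and bounded above
  have hSne : ∀ N : ℕ, {r : ℝ | ∃ ω : Fin N → EuclideanSpace ℝ (Fin m),
      (∀ i, ω i ∈ Δ) ∧ scenVal X c f ω = r}.Nonempty :=
    fun N => ⟨scenVal X c f (fun _ => δ₀), fun _ => δ₀, fun _ => hδ₀, rfl⟩
  have hSbdd : ∀ N : ℕ, BddAbove {r : ℝ | ∃ ω : Fin N → EuclideanSpace ℝ (Fin m),
      (∀ i, ω i ∈ Δ) ∧ scenVal X c f ω = r} := by
    intro N
    refine ⟨J, ?_⟩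
    rintro r ⟨ω, hω, rfl⟩
    exact hub N ω hω
  -- main lower bound
  have hmain : ∀ N : ℕ, d ≤ N → ∀ ε : ℝ, 0 < ε →
      J - ε ≤ scenSup X c f Δ N := by
    intro N hN ε hε
    -- Helly family
    set F : Option ↥Δ → Set (EuclideanSpace ℝ (Fin d)) :=
      fun o => Option.rec (X ∩ {x | L x ≤ J - ε}) (fun δ => A ↑δ) o with hFdef
    have hFconv : ∀ o, Convex ℝ (F o) := by
      rintro (_ | δ)
      · exact hXconv.inter (convex_halfSpace_le hLlin _)
      · exact hAconv ↑δ δ.2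
    have hFcomp : ∀ o, IsCompact (F o) := by
      rintro (_ | δ)
      · exact hXcomp.inter_right (isClosed_le hLcont continuous_const)
      · exact hAcomp ↑δ δ.2
    have hFempty : ¬ (⋂ o, F o).Nonempty := by
      rintro ⟨x, hx⟩
      have hxN : x ∈ F none := Set.mem_iInter.mp hx none
      have hxR : x ∈ R := by
        refine ⟨hxN.1, fun δ hδ => ?_⟩
        exact (Set.mem_iInter.mp hx (some ⟨δ, hδ⟩)).2
      have h1 : J ≤ L x := csInf_le (hbdd R hRX) ⟨x, hxR, rfl⟩
      have h2 : L x ≤ J - ε := hxN.2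
      linarith
    -- contrapositive of Helly's compact theorem
    have hI : ∃ I : Finset (Option ↥Δ), I.card ≤ Module.finrank ℝ (EuclideanSpace ℝ (Fin d)) + 1
        ∧ ¬ (⋂ o ∈ I, F o).Nonempty := by
      by_contra h
      push_neg at h
      exact hFempty (Convex.helly_theorem_compact' hFconv hFcomp
        (fun I hI => h I hI))
    obtain ⟨I, hIcard, hIempty⟩ := hI
    rw [finrank_euclideanSpace_fin] at hIcard
    -- `none` must belong to `I`
    have hnone : none ∈ I := by
      by_contra hn
      apply hIempty
      refine ⟨x₀, Set.mem_biInter ?_⟩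
      rintro (_ | δ) ho
      · exact absurd ho hn
      · exact hx₀A ↑δ δ.2
    -- the scenario list
    set I' : Finset (Option ↥Δ) := I.erase none with hI'def
    have hI'card : I'.card ≤ d := by
      rw [hI'def, Finset.card_erase_of_mem hnone]
      omega
    set l : List ↥Δ := I'.toList.filterMap id with hldef
    have hlen : l.length ≤ N := by
      calc l.length ≤ I'.toList.length := List.length_filterMap_le _ _
        _ = I'.card := Finset.length_toList _
        _ ≤ d := hI'card
        _ ≤ N := hN
    set ω : Fin N → EuclideanSpace ℝ (Fin m) :=
      fun i => if h : (i : ℕ) < l.length then ↑(l.get ⟨i, h⟩) else δ₀ with hωdef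
    have hωΔ : ∀ i, ω i ∈ Δ := by
      intro i
      simp only [hωdef]
      split
      · exact (l.get _).2
      · exact hδ₀
    have hcover : ∀ δ : ↥Δ, some δ ∈ I → ∃ i : Fin N, ω i = ↑δ := by
      intro δ hδI
      have hmem : δ ∈ l := by
        rw [hldef, List.mem_filterMap]
        exact ⟨some δ, by
          rw [Finset.mem_toList, hI'def, Finset.mem_erase]
          exact ⟨Option.some_ne_none δ, hδI⟩, rfl⟩
      obtain ⟨n, hget⟩ := List.mem_iff_get.mp hmem
      refine ⟨⟨n, lt_of_lt_of_le n.2 hlen⟩, ?_⟩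
      have h1 : ω ⟨(n : ℕ), lt_of_lt_of_le n.2 hlen⟩ = ↑(l.get n) := by
        simp only [hωdef]
        rw [dif_pos n.2]
      rw [h1, hget]
    -- all scenario-feasible points have value > J - ε
    have hkey : ∀ x, x ∈ X → (∀ i, f x (ω i) ≤ 0) → J - ε ≤ L x := by
      intro x hxX hxf
      by_contra h
      push_neg at h
      apply hIempty
      refine ⟨x, Set.mem_biInter ?_⟩
      rintro (_ | δ) ho
      · exact ⟨hxX, h.le⟩
      · obtain ⟨i, hi⟩ := hcover δ ho
        exact ⟨hxX, by rw [← hi]; exact hxf i⟩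
    have hω_val : J - ε ≤ scenVal X c f ω := by
      show J - ε ≤ sInf (L '' {x ∈ X | ∀ i, f x (ω i) ≤ 0})
      refine le_csInf (Set.Nonempty.image L ?_) ?_
      · exact ⟨x₀, hx₀X, fun i => hx₀ (ω i) (hωΔ i)⟩
      rintro b ⟨x, ⟨hxX, hxf⟩, rfl⟩
      exact hkey x hxX hxf
    calc J - ε ≤ scenVal X c f ω := hω_val
      _ ≤ scenSup X c f Δ N := le_csSup (hSbdd N) ⟨ω, hωΔ, rfl⟩
  have hmain' : ∀ N : ℕ, d ≤ N → scenSup X c f Δ N = robustVal X c f Δ := by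
    intro N hN
    apply le_antisymm
    · apply csSup_le (hSne N)
      rintro r ⟨ω, hω, rfl⟩
      exact hub N ω hω
    · by_contra h
      push_neg at h
      have hε : 0 < (J - scenSup X c f Δ N) / 2 := by
        simp only [hJdef]; linarith
      have := hmain N hN _ hε
      simp only [hJdef] at this
      linarith
  refine ⟨hmain', ?_⟩
  exact Nat.sInf_le (hmain' d le_rfl)
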